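/- Let F₀ be the Kripke frame on worlds {0,1,2,3,4} with accessibility R₀ = {(i,j) ∣ 4 ≥ i ≥ j ≥ 0} ∪ {(0,1)}. There is no formula α(p, r, s) that is positive in p (contains no negated occurrence of p) such that φ(p,r,s) := (◇(¬s ∧ ¬r ∧ ◇(¬s ∧ r ∧ ¬p)) ∧ □(¬s ∧ r → □(¬s ∧ ¬r → □(¬s ∧ r → p)))) ∨ □(¬s ∧ r → p) is equivalent to α at every world of F₀ under every valuation. -/

import Mathlib

/-- Modal formulas in negation normal form. -/
inductive Fm where
  | var : ℕ → Fm
  | nvar : ℕ → Fm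
  | bot : Fm
  | top : Fm
  | and : Fm → Fm → Fm
  | or : Fm → Fm → Fm
  | dia : Fm → Fm
  | box : Fm → Fm

/-- Kripke semantics for formulas in negation normal form. -/
def ksatN {W : Type*} (R : W → W → Prop) (ϑ : ℕ → Set W) : Fm → W → Prop
  | .var n, w => w ∈ ϑ n
  | .nvar n, w => w ∉ ϑ n
  | .bot, _ => False
  | .top, _ => True
  | .and a b, w => ksatN R ϑ a w ∧ ksatN R ϑ b w
  | .or a b, w => ksatN R ϑ a w ∨ ksatN R ϑ b w
  | .dia a, w => ∃ v, R w v ∧ ksatN R ϑ a v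
  | .box a, w => ∀ v, R w v → ksatN R ϑ a v

/-- `φ` is positive in variable `0` (the variable `p`): no occurrence of `¬p`. -/
def posInP : Fm → Prop
  | .var _ => True
  | .nvar n => n ≠ 0
  | .bot => True
  | .top => True
  | .and a b => posInP a ∧ posInP b
  | .or a b => posInP a ∧ posInP b
  | .dia a => posInP a
  | .box a => posInP a

/-- The frame `F₀` on `{0,1,2,3,4}` with `R₀ = {(i,j) ∣ 4 ≥ i ≥ j ≥ 0} ∪ {(0,1)}`. -/
def R0 : Fin 5 → Fin 5 → Prop := fun i j => j ≤ i ∨ (i = 0 ∧ j = 1)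

/-- Truth of the formula
`φ(p,r,s) := (◇(¬s ∧ ¬r ∧ ◇(¬s ∧ r ∧ ¬p)) ∧ □(¬s ∧ r → □(¬s ∧ ¬r → □(¬s ∧ r → p)))) ∨ □(¬s ∧ r → p)`,
with valuations `P`, `Rv`, `S` of the variables `p`, `r`, `s`. -/
def phiTrue {W : Type*} (R : W → W → Prop) (P Rv S : Set W) (w : W) : Prop :=
  ((∃ v, R w v ∧ v ∉ S ∧ v ∉ Rv ∧ ∃ u, R v u ∧ u ∉ S ∧ u ∈ Rv ∧ u ∉ P) ∧
   (∀ v, R w v → v ∉ S → v ∈ Rv →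
      ∀ u, R v u → u ∉ S → u ∉ Rv →
        ∀ t, R u t → t ∉ S → t ∈ Rv → t ∈ P)) ∨
  (∀ v, R w v → v ∉ S → v ∈ Rv → v ∈ P)

/-- First valuation in the counterexample: `P = {0}`, `Rv = {0,2}`, `S = {4}`. -/
def val1 : ℕ → Set (Fin 5)
  | 0 => {w | w = 0}
  | 1 => {w | w = 0 ∨ w = 2}
  | 2 => {w | w = 4}
  | _ => ∅

/-- Second valuation in the counterexample: `P = {0}`, `Rv = {0,2}`, `S = {3}`. -/
def val2 : ℕ → Set (Fin 5)
  | 0 => {w | w = 0}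
  | 1 => {w | w = 0 ∨ w = 2}
  | 2 => {w | w = 3}
  | _ => ∅

/-- The positive simulation between the two models. -/
def Zsim : Fin 5 → Fin 5 → Prop := fun w w' =>
  (w = 0 ∧ w' = 0) ∨ (w = 1 ∧ w' = 1) ∨ (w = 2 ∧ w' = 0) ∨
  (w = 2 ∧ w' = 2) ∨ (w = 3 ∧ w' = 1) ∨ (w = 4 ∧ w' = 3)

/-- Positive formulas are preserved forward along positive simulations. -/
lemma pos_preserved {W W' : Type*} (R : W → W → Prop) (R' : W' → W' → Prop)
    (ϑ : ℕ → Set W) (ϑ' : ℕ → Set W') (Z : W → W' → Prop)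
    (hp : ∀ w w', Z w w' → w ∈ ϑ 0 → w' ∈ ϑ' 0)
    (hv : ∀ n, n ≠ 0 → ∀ w w', Z w w' → (w ∈ ϑ n ↔ w' ∈ ϑ' n))
    (forth : ∀ w w', Z w w' → ∀ v, R w v → ∃ v', R' w' v' ∧ Z v v')
    (back : ∀ w w', Z w w' → ∀ v', R' w' v' → ∃ v, R w v ∧ Z v v') :
    ∀ α : Fm, posInP α → ∀ w w', Z w w' → ksatN R ϑ α w → ksatN R' ϑ' α w' := by
  intro α
  induction α with
  | var n =>
      intro _ w w' hz h
      rcases Nat.eq_zero_or_pos n with rfl | hn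
      · exact hp w w' hz h
      · exact (hv n (Nat.pos_iff_ne_zero.mp hn) w w' hz).mp h
  | nvar n =>
      intro hpos w w' hz h
      exact fun h' => h ((hv n hpos w w' hz).mpr h')
  | bot =>
      intro _ _ _ _ h
      exact h
  | top =>
      intro _ _ _ _ _
      trivial
  | and a b iha ihb =>
      intro hpos w w' hz h
      exact ⟨iha hpos.1 w w' hz h.1, ihb hpos.2 w w' hz h.2⟩
  | or a b iha ihb =>
      intro hpos w w' hz h
      rcases h with h | h
      · exact Or.inl (iha hpos.1 w w' hz h)
      · exact Or.inr (ihb hpos.2 w w' hz h)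
  | dia a ih =>
      intro hpos w w' hz h
      rcases h with ⟨v, hRv, hsat⟩
      rcases forth w w' hz v hRv with ⟨v', hR', hz'⟩
      exact ⟨v', hR', ih hpos v v' hz' hsat⟩
  | box a ih =>
      intro hpos w w' hz h v' hR'
      rcases back w w' hz v' hR' with ⟨v, hRv, hz'⟩
      exact ih hpos v v' hz' (h v hRv)

lemma zsim_hp : ∀ w w', Zsim w w' → w ∈ val1 0 → w' ∈ val2 0 := by
  simp only [Zsim, val1, val2, Set.mem_setOf_eq]
  decide

lemma zsim_hv : ∀ n, n ≠ 0 → ∀ w w', Zsim w w' → (w ∈ val1 n ↔ w' ∈ val2 n) := by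
  intro n hn
  match n, hn with
  | 1, _ =>
      simp only [Zsim, val1, val2, Set.mem_setOf_eq]
      decide
  | 2, _ =>
      simp only [Zsim, val1, val2, Set.mem_setOf_eq]
      decide
  | (n+3), _ =>
      intro w w' _
      simp [val1, val2]

lemma zsim_forth : ∀ w w', Zsim w w' → ∀ v, R0 w v → ∃ v', R0 w' v' ∧ Zsim v v' := by
  simp only [Zsim, R0]
  decide

set_option synthInstance.maxSize 1000 in
set_option synthInstance.maxHeartbeats 1000000 in
lemma zsim_back : ∀ w w', Zsim w w' → ∀ v', R0 w' v' → ∃ v, R0 w v ∧ Zsim v v' := by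
  simp only [Zsim, R0]
  decide

set_option synthInstance.maxSize 1000 in
set_option synthInstance.maxHeartbeats 1000000 in
lemma phi_val1 : phiTrue R0 (val1 0) (val1 1) (val1 2) 4 := by
  simp only [phiTrue, R0, val1, Set.mem_setOf_eq, Set.mem_empty_iff_false]
  decide

set_option synthInstance.maxSize 1000 in
set_option synthInstance.maxHeartbeats 1000000 in
lemma phi_val2 : ¬ phiTrue R0 (val2 0) (val2 1) (val2 2) 3 := by
  simp only [phiTrue, R0, val2, Set.mem_setOf_eq, Set.mem_empty_iff_false]
  decide

/-- There is no `p`-positive formula equivalent to `φ(p,r,s)` on the frame `F₀`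
(variables: `p` is variable `0`, `r` is variable `1`, `s` is variable `2`). -/
theorem no_p_positive_equivalent_on_F0 :
    ¬ ∃ α : Fm, posInP α ∧
      ∀ (ϑ : ℕ → Set (Fin 5)) (w : Fin 5),
        phiTrue R0 (ϑ 0) (ϑ 1) (ϑ 2) w ↔ ksatN R0 ϑ α w := by
  rintro ⟨α, hpos, hequiv⟩
  have h1 : ksatN R0 val1 α 4 := (hequiv val1 4).mp phi_val1
  have h2 : ksatN R0 val2 α 3 :=
    pos_preserved R0 R0 val1 val2 Zsim zsim_hp zsim_hv zsim_forth zsim_back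
      α hpos 4 3 (by simp [Zsim]) h1
  exact phi_val2 ((hequiv val2 3).mpr h2)
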